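/- Let p be a prime, q a power of p, and let I be a nonzero ideal of the formal power series ring 𝔽_q⟦X⟧. Then the quotient 𝔽_q⟦X⟧/I is a finite symmetric 𝔽_p-algebra. -/

import Mathlib

open PowerSeries

/-- Let `p` be a prime and `𝔽_q` a finite field of characteristic `p` (so `q` is a power
of `p`). For every nonzero ideal `I` of the formal power series ring `𝔽_q⟦X⟧`, the
quotient `𝔽_q⟦X⟧/I` is a finite symmetric `𝔽_p`-algebra. -/
theorem powerSeries_quotient_symmetric (p : ℕ) [Fact p.Prime]
    (Fq : Type*) [Field Fq] [Fintype Fq] [CharP Fq p]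
    (I : Ideal (PowerSeries Fq)) (hI : I ≠ ⊥) :
    Finite (PowerSeries Fq ⧸ I) ∧
    ∃ ψ : (PowerSeries Fq ⧸ I) →+ ZMod p,
      ∀ J : Ideal (PowerSeries Fq ⧸ I), (∀ x ∈ J, ψ x = 0) → J = ⊥ := by
  classical
  obtain ⟨a, ha⟩ := IsDiscreteValuationRing.ideal_eq_span_pow_irreducible hI
    (PowerSeries.X_irreducible : Irreducible (X : PowerSeries Fq))
  subst ha
  rcases Nat.eq_zero_or_pos a with rfl | hapos
  · have htop : (Ideal.span {(X : PowerSeries Fq) ^ 0}) = ⊤ := by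
      simp [Ideal.span_singleton_one]
    have hsub : Subsingleton (PowerSeries Fq ⧸ Ideal.span {(X : PowerSeries Fq) ^ 0}) := by
      rw [htop]
      infer_instance
    refine ⟨Finite.of_subsingleton, 0, fun J _ => ?_⟩
    ext x
    simp [Subsingleton.elim x 0]
  set I : Ideal (PowerSeries Fq) := Ideal.span {(X : PowerSeries Fq) ^ a} with hIdef
  have hmem : ∀ f : PowerSeries Fq, f ∈ I ↔ ∀ m < a, coeff (R := Fq) m f = 0 := by
    intro f
    rw [hIdef, Ideal.mem_span_singleton, PowerSeries.X_pow_dvd_iff]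
  -- linear functional on Fq
  letI : Algebra (ZMod p) Fq := ZMod.algebra Fq p
  let B := Module.Basis.ofVectorSpace (ZMod p) Fq
  obtain ⟨i0⟩ := B.index_nonempty
  let lam : Fq →+ ZMod p := (B.coord i0).toAddMonoidHom
  have hlam : lam (B i0) = 1 := by simp [lam, Module.Basis.coord_apply]
  -- lift of coefficient maps
  have hcompat : ∀ (n : ℕ) (f g : PowerSeries Fq),
      (Submodule.quotientRel I) f g → n < a → coeff (R := Fq) n f = coeff (R := Fq) n g := by
    intro n f g hfg hn
    have h : f - g ∈ I := (Submodule.quotientRel_def _).mp hfg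
    have h0 := (hmem _).mp h n hn
    rw [map_sub, sub_eq_zero] at h0
    exact h0
  let cfun : (PowerSeries Fq ⧸ I) → (Fin a → Fq) := fun x =>
    Quotient.liftOn' x (fun f i => coeff (R := Fq) i f)
      (fun f g hfg => funext fun i => hcompat i f g hfg i.2)
  have hcmk : ∀ f : PowerSeries Fq, cfun (Ideal.Quotient.mk I f) = fun i : Fin a => coeff (R := Fq) i f :=
    fun f => rfl
  have hfin : Finite (PowerSeries Fq ⧸ I) := by
    refine Finite.of_injective cfun ?_
    intro x y h
    obtain ⟨f, rfl⟩ := Ideal.Quotient.mk_surjective x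
    obtain ⟨g, rfl⟩ := Ideal.Quotient.mk_surjective y
    rw [Ideal.Quotient.eq]
    rw [hmem]
    intro m hm
    have := congrFun h ⟨m, hm⟩
    rw [hcmk, hcmk] at h
    have := congrFun h ⟨m, hm⟩
    simp only at this
    rw [map_sub, this, sub_self]
  refine ⟨hfin, ?_⟩
  have hb : a - 1 < a := Nat.sub_lt hapos one_pos
  let ψfun : (PowerSeries Fq ⧸ I) → ZMod p := fun x =>
    Quotient.liftOn' x (fun f => lam (coeff (R := Fq) (a - 1) f))
      (fun f g hfg => congrArg lam (hcompat (a-1) f g hfg hb))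
  have hψmk : ∀ f : PowerSeries Fq, ψfun (Ideal.Quotient.mk I f) = lam (coeff (R := Fq) (a - 1) f) :=
    fun f => rfl
  refine ⟨⟨⟨ψfun, ?_⟩, ?_⟩, ?_⟩
  · have : (0 : PowerSeries Fq ⧸ I) = Ideal.Quotient.mk I 0 := by simp
    rw [this, hψmk]
    simp
  · intro x y
    obtain ⟨f, rfl⟩ := Ideal.Quotient.mk_surjective x
    obtain ⟨g, rfl⟩ := Ideal.Quotient.mk_surjective y
    show ψfun (Ideal.Quotient.mk I f + Ideal.Quotient.mk I g)
      = ψfun (Ideal.Quotient.mk I f) + ψfun (Ideal.Quotient.mk I g)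
    rw [← map_add, hψmk, hψmk, hψmk, map_add, map_add]
  · intro J hJ
    by_contra hJne
    obtain ⟨x, hxJ, hx0⟩ := (Submodule.ne_bot_iff J).mp hJne
    obtain ⟨f, rfl⟩ := Ideal.Quotient.mk_surjective x
    have hfI : f ∉ I := fun h => hx0 (Ideal.Quotient.eq_zero_iff_mem.mpr h)
    have : ¬ ∀ m < a, coeff (R := Fq) m f = 0 := fun h => hfI ((hmem f).mpr h)
    push_neg at this
    obtain ⟨n, hn, hun⟩ := this
    have hn1 : n ≤ a - 1 := Nat.le_sub_one_of_lt hn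
    set c : Fq := B i0 * (coeff (R := Fq) n f)⁻¹ with hc
    set g : PowerSeries Fq := PowerSeries.C (R := Fq) c * X ^ (a - 1 - n) with hg
    have hy : Ideal.Quotient.mk I g * Ideal.Quotient.mk I f ∈ J :=
      J.mul_mem_left _ hxJ
    have h0 := hJ _ hy
    rw [← map_mul] at h0
    simp only [AddMonoidHom.coe_mk, ZeroHom.coe_mk] at h0
    have key : coeff (R := Fq) (a - 1) ((X : PowerSeries Fq) ^ (a - 1 - n) * f) = coeff (R := Fq) n f := by
      have h2 := PowerSeries.coeff_X_pow_mul f (a - 1 - n) n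
      rwa [Nat.add_sub_cancel' hn1] at h2
    have hcoeff : coeff (R := Fq) (a - 1) (g * f) = B i0 := by
      rw [hg, mul_assoc, PowerSeries.coeff_C_mul, key, hc]
      field_simp
    rw [hψmk, hcoeff, hlam] at h0
    exact one_ne_zero h0
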